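/- Let K be a d-simplex and F, F′ two distinct faces of K. Let ψ_F = (2d−1)!/((d−1)!·|F|) · ∏_{z ∈ V_F} λ_z where V_F is the set of vertices of F and λ_z the barycentric coordinate associated with vertex z. Then ∫_{F′} ψ_F dS = 0. -/
import Mathlib


open MeasureTheory

/-- The face bubble associated with a face `F` of a `d`-simplex `K` integrates to
zero over every other face `F'` of `K`. The simplex has vertices `b i`,
`i : Fin (d+1)`, with barycentric coordinates `b.coord i`; the face opposite
vertex `j` is the convex hull of the remaining vertices. `F` is the face opposite
`j`, `F'` the face opposite `j' ≠ j`, and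
`ψ_F = (2d-1)!/((d-1)! |F|) ∏_{i ≠ j} λ_i`. -/
theorem face_bubble_vanishes_on_other_faces
    (d : ℕ) (hd : 1 ≤ d)
    (b : AffineBasis (Fin (d + 1)) ℝ (EuclideanSpace ℝ (Fin d)))
    (j j' : Fin (d + 1)) (hjj' : j ≠ j')
    (F F' : Set (EuclideanSpace ℝ (Fin d)))
    (hF : F = convexHull ℝ ((fun i => b i) '' {i | i ≠ j}))
    (hF' : F' = convexHull ℝ ((fun i => b i) '' {i | i ≠ j'}))
    (ψ : EuclideanSpace ℝ (Fin d) → ℝ)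
    (hψ : ∀ x, ψ x = ((2 * d - 1).factorial : ℝ) /
        (((d - 1).factorial : ℝ) * (μH[(d : ℝ) - 1] F).toReal) *
        ∏ i ∈ Finset.univ.filter (· ≠ j), b.coord i x) :
    ∫ x in F', ψ x ∂(μH[(d : ℝ) - 1]) = 0 := by
  apply MeasureTheory.setIntegral_eq_zero_of_forall_eq_zero
  intro x hx
  have hcoord : b.coord j' x = 0 := by
    have hx' : x ∈ convexHull ℝ ((fun i => b i) '' {i | i ≠ j'}) := hF' ▸ hx
    have := Set.mem_image_of_mem (b.coord j') hx'
    rw [AffineMap.image_convexHull] at this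
    have hsub : (b.coord j') '' ((fun i => b i) '' {i | i ≠ j'}) ⊆ {(0 : ℝ)} := by
      rintro y ⟨z, ⟨i, hi, rfl⟩, rfl⟩
      simp only [Set.mem_singleton_iff]
      rw [b.coord_apply]
      simp [Ne.symm hi]
    have := convexHull_mono hsub this
    simpa using this
  rw [hψ]
  have hj' : j' ∈ Finset.univ.filter (· ≠ j) := by simp [Ne.symm hjj']
  rw [Finset.prod_eq_zero hj' hcoord, mul_zero]
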